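/- Let φ : Ω₂ → ℝ (Ω₂ ⊆ ℝ² a rectangle) be 2-increasing, non-increasing in the first coordinate and non-decreasing in the second coordinate, and let f : ℝ → ℝ be concave and non-decreasing. Then f ∘ φ is 2-increasing. -/

import Mathlib

lemma concave_aux (f : ℝ → ℝ) (hf : ConcaveOn ℝ Set.univ f)
    (a s t : ℝ) (hs : 0 ≤ s) (ht : 0 ≤ t) :
    f (a + s + t) + f a ≤ f (a + s) + f (a + t) := by
  rcases eq_or_lt_of_le (add_nonneg hs ht) with h | h
  · have hs0 : s = 0 := by linarith
    have ht0 : t = 0 := by linarith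
    simp [hs0, ht0]
  · have hst : 0 < s + t := h
    have h1 := hf.2 (Set.mem_univ a) (Set.mem_univ (a + s + t))
      (div_nonneg ht hst.le) (div_nonneg hs hst.le) (by field_simp; ring)
    have h2 := hf.2 (Set.mem_univ a) (Set.mem_univ (a + s + t))
      (div_nonneg hs hst.le) (div_nonneg ht hst.le) (by field_simp)
    have e1 : (t / (s + t)) • a + (s / (s + t)) • (a + s + t) = a + s := by
      rw [smul_eq_mul, smul_eq_mul, div_mul_eq_mul_div, div_mul_eq_mul_div, ← add_div, div_eq_iff hst.ne']; ring
    have e2 : (s / (s + t)) • a + (t / (s + t)) • (a + s + t) = a + t := by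
      rw [smul_eq_mul, smul_eq_mul, div_mul_eq_mul_div, div_mul_eq_mul_div, ← add_div, div_eq_iff hst.ne']; ring
    rw [e1] at h1; rw [e2] at h2
    have := add_le_add h1 h2
    have key : (t / (s + t)) • f a + (s / (s + t)) • f (a + s + t) +
        ((s / (s + t)) • f a + (t / (s + t)) • f (a + s + t)) =
        f a + f (a + s + t) := by
      simp only [smul_eq_mul]; field_simp; ring
    linarith [key ▸ this]

theorem comp_concave_monotone_two_increasing
    (Ω : Set (ℝ × ℝ)) (φ : ℝ → ℝ → ℝ) (f : ℝ → ℝ)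
    (h2incr : ∀ x₁ x₂ y₁ y₂ : ℝ, x₁ ≤ x₂ → y₁ ≤ y₂ →
      Set.Icc x₁ x₂ ×ˢ Set.Icc y₁ y₂ ⊆ Ω →
      φ x₁ y₂ + φ x₂ y₁ ≤ φ x₁ y₁ + φ x₂ y₂)
    (hanti₁ : ∀ x₁ x₂ y : ℝ, x₁ ≤ x₂ → (x₁, y) ∈ Ω → (x₂, y) ∈ Ω → φ x₂ y ≤ φ x₁ y)
    (hmono₂ : ∀ x y₁ y₂ : ℝ, y₁ ≤ y₂ → (x, y₁) ∈ Ω → (x, y₂) ∈ Ω → φ x y₁ ≤ φ x y₂)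
    (hf_mono : Monotone f) (hf_conc : ConcaveOn ℝ Set.univ f) :
    ∀ x₁ x₂ y₁ y₂ : ℝ, x₁ ≤ x₂ → y₁ ≤ y₂ →
      Set.Icc x₁ x₂ ×ˢ Set.Icc y₁ y₂ ⊆ Ω →
      f (φ x₁ y₂) + f (φ x₂ y₁) ≤ f (φ x₁ y₁) + f (φ x₂ y₂) := by
  intro x₁ x₂ y₁ y₂ hx hy hΩ
  have m11 : (x₁, y₁) ∈ Ω := hΩ ⟨⟨le_refl _, hx⟩, ⟨le_refl _, hy⟩⟩
  have m21 : (x₂, y₁) ∈ Ω := hΩ ⟨⟨hx, le_refl _⟩, ⟨le_refl _, hy⟩⟩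
  have m12 : (x₁, y₂) ∈ Ω := hΩ ⟨⟨le_refl _, hx⟩, ⟨hy, le_refl _⟩⟩
  have m22 : (x₂, y₂) ∈ Ω := hΩ ⟨⟨hx, le_refl _⟩, ⟨hy, le_refl _⟩⟩
  set a := φ x₂ y₁
  have hac : a ≤ φ x₁ y₁ := hanti₁ x₁ x₂ y₁ hx m11 m21
  have hab : a ≤ φ x₂ y₂ := hmono₂ x₂ y₁ y₂ hy m21 m22
  have hd : φ x₁ y₂ + a ≤ φ x₁ y₁ + φ x₂ y₂ := h2incr x₁ x₂ y₁ y₂ hx hy hΩ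
  have key := concave_aux f hf_conc a (φ x₁ y₁ - a) (φ x₂ y₂ - a)
    (by linarith) (by linarith)
  have e3 : a + (φ x₁ y₁ - a) + (φ x₂ y₂ - a) = φ x₁ y₁ + φ x₂ y₂ - a := by ring
  have e1 : a + (φ x₁ y₁ - a) = φ x₁ y₁ := by ring
  have e2 : a + (φ x₂ y₂ - a) = φ x₂ y₂ := by ring
  rw [e3, e1, e2] at key
  have h1 : f (φ x₁ y₂) ≤ f (φ x₁ y₁ + φ x₂ y₂ - a) := hf_mono (by linarith)
  linarith
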